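/- In any sequence of t insert operations applied to a 2-3 tree that initially has n̄_i nodes at height i, with t > n̄_i, the number of node splits occurring at height i is at most n̄_i + ⌈(t − n̄_i)/2^i⌉, assuming (a) each of the initially present height-i nodes can split at most once before being 'refreshed', and (b) after the initial splits, each split at height i requires 2^i insertions since the previous split at that height. -/

import Mathlib

/-- Lemma 3 (split-gro): in a sequence of t > n̄ᵢ operations, where the s node splits at
height i occur at strictly increasing times f j < t, the initially present n̄ᵢ nodes each
split at most once, and each subsequent split (index j ≥ n̄ᵢ) requires 2^i insertions
since the previous one, the number of splits satisfies s ≤ n̄ᵢ + ⌈(t − n̄ᵢ)/2^i⌉. -/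
theorem stmt_8 (t nbar i s : ℕ) (ht : nbar < t) (f : Fin s → ℕ)
    (hmono : StrictMono f) (hlt : ∀ j, f j < t)
    (hlate : ∀ j : Fin s, nbar ≤ (j : ℕ) → nbar + ((j : ℕ) - nbar) * 2 ^ i ≤ f j) :
    s ≤ nbar + (t - nbar + 2 ^ i - 1) / 2 ^ i := by
  rcases le_or_gt s nbar with h | h
  · exact le_trans h (Nat.le_add_right _ _)
  · have hs0 : s - 1 < s := by omega
    have h1 := hlate ⟨s - 1, hs0⟩ (by simp; omega)
    have h2 := hlt ⟨s - 1, hs0⟩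
    simp only at h1
    set p := 2 ^ i with hp
    have hp0 : 0 < p := Nat.pow_pos (by norm_num)
    have key : (s - nbar) * p ≤ t - nbar + p - 1 := by
      have : (s - nbar) * p = (s - 1 - nbar) * p + p := by
        have : s - nbar = (s - 1 - nbar) + 1 := by omega
        rw [this]; ring
      omega
    have := (Nat.le_div_iff_mul_le hp0).mpr key
    omega
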